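/- With the notation of the alternative algorithm for Büchi games, the set Ẑ = Z \ L computed from C1, C2, X = Attr2(C1∪C2,G), Z = X∩C, D, L = Attr1(D,G↾X) equals the set Tr = S \ Attr1(B,G) computed by one iteration of the classical algorithm. -/
import Mathlib


open Classical

universe u

structure GameGraph (S : Type u) where
  E : S → Set S
  S1 : Set S
  succ_nonempty : ∀ s, (E s).Nonempty

namespace GameGraph

variable {S : Type u} (G : GameGraph S)

/-- A (general, history-dependent) strategy: given a history and the current
state, choose a successor. -/
abbrev Strat := { f : List S → S → S // ∀ h s, f h s ∈ G.E s }

open Classical in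
/-- The pair (history so far, current state) after `n` steps of the play from
`s` where player 1 uses `σ` (at states of `S1`) and player 2 uses `π`. -/
noncomputable def playPair (σ π : List S → S → S) (s : S) : ℕ → List S × S
  | 0 => ([], s)
  | n+1 =>
      let p := playPair σ π s n
      (p.1 ++ [p.2], if p.2 ∈ G.S1 then σ p.1 p.2 else π p.1 p.2)

/-- The unique play `ω(s,σ,π)`. -/
noncomputable def play (σ π : List S → S → S) (s : S) (n : ℕ) : S :=
  (G.playPair σ π s n).2

/-- Lift a memoryless strategy to a general one. -/
def liftML (f : S → S) : List S → S → S := fun _ s => f s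

def Reach (T : Set S) : Set (ℕ → S) := { ω | ∃ k, ω k ∈ T }

def Safe (F : Set S) : Set (ℕ → S) := { ω | ∀ k, ω k ∈ F }

/-- States occurring infinitely often in a play. -/
def InfOcc (ω : ℕ → S) : Set S := { t | ∀ N, ∃ k, N ≤ k ∧ ω k = t }

def Buchi (B : Set S) : Set (ℕ → S) := { ω | (InfOcc ω ∩ B).Nonempty }

def coBuchi (C : Set S) : Set (ℕ → S) := { ω | InfOcc ω ⊆ C }

/-- Winning set of player 1 for objective `Φ`. -/
def W1 (Φ : Set (ℕ → S)) : Set S :=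
  { s | ∃ σ : G.Strat, ∀ π : G.Strat, (G.play σ.1 π.1 s) ∈ Φ }

/-- Winning set of player 2 for objective `Ψ`. -/
def W2 (Ψ : Set (ℕ → S)) : Set S :=
  { s | ∃ π : G.Strat, ∀ σ : G.Strat, (G.play σ.1 π.1 s) ∈ Ψ }

/-- `U` is closed for player 1: player-1 states of `U` have all successors in
`U`, player-2 states of `U` have some successor in `U`. -/
def Closed1 (U : Set S) : Prop :=
  (∀ s ∈ U ∩ G.S1, G.E s ⊆ U) ∧ (∀ s ∈ U \ G.S1, (G.E s ∩ U).Nonempty)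

/-- `U` is closed for player 2. -/
def Closed2 (U : Set S) : Prop :=
  (∀ s ∈ U \ G.S1, G.E s ⊆ U) ∧ (∀ s ∈ U ∩ G.S1, (G.E s ∩ U).Nonempty)

/-- The inductive attractor sequence for player 1. -/
def AttrSeq1 (U : Set S) : ℕ → Set S
  | 0 => U
  | n+1 => AttrSeq1 U n
      ∪ { s | s ∈ G.S1 ∧ (G.E s ∩ AttrSeq1 U n).Nonempty }
      ∪ { s | s ∉ G.S1 ∧ G.E s ⊆ AttrSeq1 U n }

/-- Player-1 attractor of `U`. -/
def Attr1 (U : Set S) : Set S := ⋃ n, G.AttrSeq1 U n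

/-- The inductive attractor sequence for player 2. -/
def AttrSeq2 (U : Set S) : ℕ → Set S
  | 0 => U
  | n+1 => AttrSeq2 U n
      ∪ { s | s ∉ G.S1 ∧ (G.E s ∩ AttrSeq2 U n).Nonempty }
      ∪ { s | s ∈ G.S1 ∧ G.E s ⊆ AttrSeq2 U n }

/-- Player-2 attractor of `U`. -/
def Attr2 (U : Set S) : Set S := ⋃ n, G.AttrSeq2 U n

/-- Player-1 attractor sequence computed inside the region `X`
(i.e. in the restricted game `G ↾ X`). -/
def AttrSeq1In (X U : Set S) : ℕ → Set S
  | 0 => U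
  | n+1 => AttrSeq1In X U n
      ∪ { s | s ∈ X ∧ s ∈ G.S1 ∧ (G.E s ∩ AttrSeq1In X U n).Nonempty }
      ∪ { s | s ∈ X ∧ s ∉ G.S1 ∧ G.E s ∩ X ⊆ AttrSeq1In X U n }

/-- Player-1 attractor of `U` inside the region `X`. -/
def Attr1In (X U : Set S) : Set S := ⋃ n, G.AttrSeq1In X U n

/-- Player-2 attractor sequence computed inside the region `X`. -/
def AttrSeq2In (X U : Set S) : ℕ → Set S
  | 0 => U
  | n+1 => AttrSeq2In X U n
      ∪ { s | s ∈ X ∧ s ∉ G.S1 ∧ (G.E s ∩ AttrSeq2In X U n).Nonempty }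
      ∪ { s | s ∈ X ∧ s ∈ G.S1 ∧ G.E s ∩ X ⊆ AttrSeq2In X U n }

/-- Player-2 attractor of `U` inside the region `X`. -/
def Attr2In (X U : Set S) : Set S := ⋃ n, G.AttrSeq2In X U n

end GameGraph

open GameGraph

section Aux

variable {S : Type u} (G : GameGraph S)

lemma attrSeq1_mono (U : Set S) : Monotone (G.AttrSeq1 U) := by
  apply monotone_nat_of_le_succ
  intro n s hs
  exact Or.inl (Or.inl hs)

lemma attrSeq1In_mono (X U : Set S) : Monotone (G.AttrSeq1In X U) := by
  apply monotone_nat_of_le_succ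
  intro n s hs
  exact Or.inl (Or.inl hs)

lemma subset_stage [Finite S] {f : ℕ → Set S} (hf : Monotone f) (T : Set S)
    (h : T ⊆ ⋃ n, f n) : ∃ n, T ⊆ f n := by
  classical
  haveI : Fintype T := Fintype.ofFinite T
  choose nf hnf using fun t : T => Set.mem_iUnion.mp (h t.2)
  refine ⟨Finset.univ.sup nf, fun t ht => ?_⟩
  exact hf (Finset.le_sup (Finset.mem_univ (⟨t, ht⟩ : T))) (hnf ⟨t, ht⟩)

end Aux

/-- the set `Z \ L` computed by the alternative algorithm equals
the set `Tr = S \ Attr1(B,G)` of the classical algorithm. -/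
theorem ZdiffL_eq_Tr {S : Type u} [Finite S] (G : GameGraph S) (B : Set S) :
    let C : Set S := Bᶜ
    let C1 : Set S := { s | s ∈ G.S1 ∧ s ∈ C ∧ G.E s ⊆ C }
    let C2 : Set S := { s | s ∉ G.S1 ∧ s ∈ C ∧ (G.E s ∩ C).Nonempty }
    let X : Set S := G.Attr2 (C1 ∪ C2)
    let Z : Set S := X ∩ C
    let D : Set S := { s | s ∈ G.S1 ∧ s ∈ Z ∧ (G.E s ∩ Zᶜ).Nonempty }
      ∪ { s | s ∉ G.S1 ∧ s ∈ Z ∧ G.E s ⊆ Zᶜ } ∪ (X \ Z)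
    let L : Set S := G.Attr1In X D
    Z \ L = (G.Attr1 B)ᶜ := by
  intro C C1 C2 X Z D L
  classical
  have hB : B ⊆ G.Attr1 B := fun s hs => Set.mem_iUnion.mpr ⟨0, hs⟩
  -- closedness properties of Tr = (Attr1 B)ᶜ
  have hTrC : (G.Attr1 B)ᶜ ⊆ C := fun s hs hsB => hs (hB hsB)
  have hTr1 : ∀ s ∈ (G.Attr1 B)ᶜ, s ∈ G.S1 → G.E s ⊆ (G.Attr1 B)ᶜ := by
    intro s hs hs1 t ht hta
    obtain ⟨n, hn⟩ := Set.mem_iUnion.mp hta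
    exact hs (Set.mem_iUnion.mpr ⟨n + 1, Or.inl (Or.inr ⟨hs1, t, ht, hn⟩)⟩)
  have hTr2 : ∀ s ∈ (G.Attr1 B)ᶜ, s ∉ G.S1 → (G.E s ∩ (G.Attr1 B)ᶜ).Nonempty := by
    intro s hs hs1
    by_contra hemp
    have hsub : G.E s ⊆ G.Attr1 B := by
      intro t ht
      by_contra h'
      exact hemp ⟨t, ht, h'⟩
    obtain ⟨n, hn⟩ := subset_stage (attrSeq1_mono G B) _ hsub
    exact hs (Set.mem_iUnion.mpr ⟨n + 1, Or.inr ⟨hs1, hn⟩⟩)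
  -- Tr ⊆ Z
  have hTrZ : (G.Attr1 B)ᶜ ⊆ Z := by
    intro s hs
    refine ⟨Set.mem_iUnion.mpr ⟨0, ?_⟩, hTrC hs⟩
    by_cases hs1 : s ∈ G.S1
    · exact Or.inl ⟨hs1, hTrC hs, fun t ht => hTrC (hTr1 s hs hs1 ht)⟩
    · obtain ⟨t, ht, htTr⟩ := hTr2 s hs hs1
      exact Or.inr ⟨hs1, hTrC hs, t, ht, hTrC htTr⟩
  -- Tr disjoint from L, stage by stage
  have hTrL : ∀ n, ∀ s ∈ (G.Attr1 B)ᶜ, s ∉ G.AttrSeq1In X D n := by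
    intro n
    induction n with
    | zero =>
      intro s hs hsD
      rcases hsD with (⟨hs1, _, t, ht, htZ⟩ | ⟨hs1, _, hsub⟩) | ⟨_, hsZ⟩
      · exact htZ (hTrZ (hTr1 s hs hs1 ht))
      · obtain ⟨t, ht, htTr⟩ := hTr2 s hs hs1
        exact hsub ht (hTrZ htTr)
      · exact hsZ (hTrZ hs)
    | succ n ih =>
      intro s hs hsS
      rcases hsS with (h | ⟨_, hs1, t, ht, htn⟩) | ⟨_, hs1, hsub⟩
      · exact ih s hs h
      · exact ih t (hTr1 s hs hs1 ht) htn
      · obtain ⟨t, ht, htTr⟩ := hTr2 s hs hs1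
        exact ih t htTr (hsub ⟨ht, (hTrZ htTr).1⟩)
  -- closedness of U = Z \ L
  have hDL : D ⊆ L := fun s hs => Set.mem_iUnion.mpr ⟨0, hs⟩
  have hU1 : ∀ s ∈ Z \ L, s ∈ G.S1 → G.E s ⊆ Z \ L := by
    intro s hs hs1 t ht
    have hsD : s ∉ D := fun h => hs.2 (hDL h)
    have htZ : t ∈ Z := by
      by_contra htZ
      exact hsD (Or.inl (Or.inl ⟨hs1, hs.1, t, ht, htZ⟩))
    refine ⟨htZ, fun htL => ?_⟩
    obtain ⟨n, hn⟩ := Set.mem_iUnion.mp htL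
    exact hs.2 (Set.mem_iUnion.mpr ⟨n + 1, Or.inl (Or.inr ⟨hs.1.1, hs1, t, ht, hn⟩)⟩)
  have hU2 : ∀ s ∈ Z \ L, s ∉ G.S1 → (G.E s ∩ (Z \ L)).Nonempty := by
    intro s hs hs1
    have hsD : s ∉ D := fun h => hs.2 (hDL h)
    by_contra hemp
    have hsub : G.E s ∩ X ⊆ L := by
      rintro t ⟨ht, htX⟩
      by_cases htZ : t ∈ Z
      · by_contra htL
        exact hemp ⟨t, ht, htZ, htL⟩
      · exact hDL (Or.inr ⟨htX, htZ⟩)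
    obtain ⟨n, hn⟩ := subset_stage (attrSeq1In_mono G X D) _ hsub
    exact hs.2 (Set.mem_iUnion.mpr ⟨n + 1, Or.inr ⟨hs.1.1, hs1, hn⟩⟩)
  -- U disjoint from Attr1 B, stage by stage
  have hUA : ∀ n, ∀ s ∈ Z \ L, s ∉ G.AttrSeq1 B n := by
    intro n
    induction n with
    | zero =>
      intro s hs hsB
      exact hs.1.2 hsB
    | succ n ih =>
      intro s hs hsS
      rcases hsS with (h | ⟨hs1, t, ht, htn⟩) | ⟨hs1, hsub⟩
      · exact ih s hs h
      · exact ih t (hU1 s hs hs1 ht) htn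
      · obtain ⟨t, ht, htU⟩ := hU2 s hs hs1
        exact ih t htU (hsub ht)
  apply Set.Subset.antisymm
  · intro s hs hsA
    obtain ⟨n, hn⟩ := Set.mem_iUnion.mp hsA
    exact hUA n s hs hn
  · intro s hs
    refine ⟨hTrZ hs, fun hsL => ?_⟩
    obtain ⟨n, hn⟩ := Set.mem_iUnion.mp hsL
    exact hTrL n s hs hn
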